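/- For bounded linear operators A, B on a complex Hilbert space, ‖A + B‖ ≤ √(‖A*A + B*B‖ + 2·w(A*B)), where w denotes the numerical radius. -/

import Mathlib

open ContinuousLinearMap

/-- The numerical radius $w(T)=\sup\{|\langle Tx,x\rangle| : \|x\|=1\}$. -/
noncomputable def numRadius {H : Type*} [NormedAddCommGroup H] [InnerProductSpace ℂ H]
    (T : H →L[ℂ] H) : ℝ :=
  ⨆ x : {x : H // ‖x‖ = 1}, ‖(inner ℂ (T x.1) x.1 : ℂ)‖

lemma le_numRadius {H : Type*} [NormedAddCommGroup H] [InnerProductSpace ℂ H]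
    (T : H →L[ℂ] H) (x : H) (hx : ‖x‖ = 1) :
    ‖(inner ℂ (T x) x : ℂ)‖ ≤ numRadius T := by
  refine le_ciSup (f := fun x : {x : H // ‖x‖ = 1} => ‖(inner ℂ (T x.1) x.1 : ℂ)‖) ?_ ⟨x, hx⟩
  refine ⟨‖T‖, ?_⟩
  rintro r ⟨⟨y, hy⟩, rfl⟩
  calc ‖(inner ℂ (T y) y : ℂ)‖ ≤ ‖T y‖ * ‖y‖ := norm_inner_le_norm _ _
    _ ≤ ‖T‖ * ‖y‖ * ‖y‖ := by
        gcongr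
        exact T.le_opNorm y
    _ = ‖T‖ := by rw [hy]; ring

theorem stmt10 {H : Type*} [NormedAddCommGroup H] [InnerProductSpace ℂ H] [CompleteSpace H]
    (A B : H →L[ℂ] H) :
    ‖A + B‖ ≤ Real.sqrt (‖adjoint A * A + adjoint B * B‖ + 2 * numRadius (adjoint A * B)) := by
  set C := ‖adjoint A * A + adjoint B * B‖ + 2 * numRadius (adjoint A * B) with hCdef
  have hw : 0 ≤ numRadius (adjoint A * B) :=
    Real.iSup_nonneg (fun x => norm_nonneg _)
  have hC : 0 ≤ C := by positivity
  have key : ∀ u : H, ‖u‖ = 1 → ‖(A + B) u‖ ≤ Real.sqrt C := by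
    intro u hu
    rw [show ‖(A + B) u‖ = Real.sqrt (‖(A + B) u‖ ^ 2) by
      rw [Real.sqrt_sq (norm_nonneg _)]]
    apply Real.sqrt_le_sqrt
    have e1 : ‖(A + B) u‖ ^ 2 = Complex.re (inner ℂ ((A + B) u) ((A + B) u) : ℂ) :=
      by simpa using InnerProductSpace.norm_sq_eq_re_inner (𝕜 := ℂ) ((A + B) u)
    have e2 : (inner ℂ ((A + B) u) ((A + B) u) : ℂ)
        = inner ℂ ((adjoint A * A + adjoint B * B) u) u + inner ℂ ((adjoint A * B) u) u
          + (starRingEnd ℂ) (inner ℂ ((adjoint A * B) u) u) := by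
      simp only [add_apply, mul_apply_eq_comp, adjoint_inner_left, inner_add_left, inner_add_right,
        ← inner_conj_symm (B u) (A u)]
      simp only [Complex.conj_conj]
      ring
    rw [e1, e2]
    simp only [Complex.add_re, Complex.conj_re]
    have h1 : Complex.re (inner ℂ ((adjoint A * A + adjoint B * B) u) u : ℂ)
        ≤ ‖adjoint A * A + adjoint B * B‖ := by
      calc Complex.re (inner ℂ ((adjoint A * A + adjoint B * B) u) u : ℂ)
          ≤ ‖(inner ℂ ((adjoint A * A + adjoint B * B) u) u : ℂ)‖ := Complex.re_le_norm _
        _ ≤ ‖(adjoint A * A + adjoint B * B) u‖ * ‖u‖ := norm_inner_le_norm _ _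
        _ ≤ ‖adjoint A * A + adjoint B * B‖ * ‖u‖ * ‖u‖ := by
            gcongr; exact le_opNorm _ u
        _ = ‖adjoint A * A + adjoint B * B‖ := by rw [hu]; ring
    have h2 : Complex.re (inner ℂ ((adjoint A * B) u) u : ℂ) ≤ numRadius (adjoint A * B) :=
      (Complex.re_le_norm _).trans (le_numRadius _ u hu)
    rw [hCdef]
    linarith
  refine opNorm_le_bound _ (Real.sqrt_nonneg _) fun x => ?_
  rcases eq_or_ne x 0 with rfl | hx
  · simp
  · have hnx : ‖x‖ ≠ 0 := norm_ne_zero_iff.mpr hx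
    have hu : ‖((‖x‖ : ℂ)⁻¹ • x)‖ = 1 := by
      rw [norm_smul, norm_inv, Complex.norm_real, norm_norm, inv_mul_cancel₀ hnx]
    have := key ((‖x‖ : ℂ)⁻¹ • x) hu
    rw [map_smul, norm_smul, norm_inv, Complex.norm_real, norm_norm] at this
    calc ‖(A + B) x‖ = ‖x‖ * (‖x‖⁻¹ * ‖(A + B) x‖) := by
          field_simp
      _ ≤ ‖x‖ * Real.sqrt C := by
          gcongr
      _ = Real.sqrt C * ‖x‖ := mul_comm _ _
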